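/- For all integers n ≥ 3 and 0 ≤ k ≤ n − 1, there exists a weak cycle D on n vertices (a digraph whose underlying graph is the cycle C_n) with F(D) = k. -/

import Mathlib

/-- The set of out-neighbors of `v` in the digraph with arc relation `A`. -/
def Nout {V : Type} (A : V → V → Prop) (v : V) : Set V := {w | A v w}

/-- The set of in-neighbors of `v`. -/
def Nin {V : Type} (A : V → V → Prop) (v : V) : Set V := {w | A w v}

/-- One application of the color change rule to the set `S` of filled vertices. -/
def Bstep {V : Type} (A : V → V → Prop) (S : Set V) : Set V :=
  S ∪ {w | ∃ v ∈ S, Nout A v \ S = {w}}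

/-- `S` is a zero forcing set: iterating the color change rule fills all vertices. -/
def IsZFS {V : Type} (A : V → V → Prop) (S : Set V) : Prop :=
  ∃ t, (Bstep A)^[t] S = Set.univ

/-- The failed zero forcing number: the maximum cardinality of a failed zero forcing set. -/
noncomputable def Fnum {V : Type} (A : V → V → Prop) : ℕ :=
  sSup {k | ∃ S : Set V, ¬ IsZFS A S ∧ S.ncard = k}

/-- The zero forcing number: the minimum cardinality of a zero forcing set. -/
noncomputable def Znum {V : Type} (A : V → V → Prop) : ℕ :=
  sInf {k | ∃ S : Set V, IsZFS A S ∧ S.ncard = k}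

/-- `W` is a critical set: `W` is nonempty and no vertex outside `W` has exactly one
out-neighbor in `W`. -/
def IsCritical {V : Type} (A : V → V → Prop) (W : Set V) : Prop :=
  W.Nonempty ∧ ∀ v ∈ Wᶜ, (Nout A v ∩ W).ncard ≠ 1

/-- `D` is a directed cycle: either a single vertex with no arcs, or the vertices can be
cyclically labeled so that the arcs are exactly the consecutive ones. -/
def IsDirectedCycle {V : Type} [Fintype V] (A : V → V → Prop) : Prop :=
  (Fintype.card V = 1 ∧ ∀ u v : V, ¬ A u v) ∨
  (2 ≤ Fintype.card V ∧ ∃ e : ZMod (Fintype.card V) ≃ V,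
      ∀ i j : ZMod (Fintype.card V), A (e i) (e j) ↔ j = i + 1)

set_option linter.unusedSectionVars false
set_option linter.unusedVariables false

section portopen
open scoped Fin.NatCast Fin.CommRing

section machinery
variable {V : Type} (A : V → V → Prop)

def Stalled (T : Set V) : Prop := ∀ v ∈ T, ∀ w, Nout A v \ T ≠ {w}

lemma bstep_subset (S : Set V) : S ⊆ Bstep A S := Set.subset_union_left

lemma bstep_sub_of_stalled {T S : Set V} (hT : Stalled A T) (hS : S ⊆ T) :
    Bstep A S ⊆ T := by
  intro w hw
  rcases hw with h | ⟨v, hv, hvw⟩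
  · exact hS h
  · by_contra hwT
    refine hT v (hS hv) w ?_
    have hwN : w ∈ Nout A v := by
      have : w ∈ Nout A v \ S := hvw ▸ rfl
      exact this.1
    apply Set.Subset.antisymm
    · intro x hx
      have : x ∈ Nout A v \ S := ⟨hx.1, fun hxS => hx.2 (hS hxS)⟩
      rw [hvw] at this; exact this
    · intro x hx
      rcases hx with rfl
      exact ⟨hwN, hwT⟩

lemma not_isZFS_of_stalled {T S : Set V} (hT : Stalled A T) (hTu : T ≠ Set.univ)
    (hS : S ⊆ T) : ¬ IsZFS A S := by
  rintro ⟨t, ht⟩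
  have key : ∀ t, (Bstep A)^[t] S ⊆ T := by
    intro t
    induction t with
    | zero => exact hS
    | succ t ih =>
      rw [Function.iterate_succ_apply']
      exact bstep_sub_of_stalled A hT ih
  exact hTu (Set.eq_univ_of_univ_subset (ht ▸ key t))

lemma isZFS_of_big [Fintype V] {k : ℕ}
    (hmax : ∀ T : Set V, Stalled A T → T ≠ Set.univ → T.ncard ≤ k)
    {S : Set V} (hS : k < S.ncard) : IsZFS A S := by
  have grow : ∀ t, (Bstep A)^[t] S = Set.univ ∨ S.ncard + t ≤ ((Bstep A)^[t] S).ncard := by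
    intro t
    induction t with
    | zero => right; simp
    | succ t ih =>
      rcases ih with h | h
      · left
        rw [Function.iterate_succ_apply', h]
        apply Set.eq_univ_of_univ_subset
        exact (bstep_subset A _)
      · set X := (Bstep A)^[t] S with hX
        by_cases hXu : X = Set.univ
        · left
          rw [Function.iterate_succ_apply', ← hX, hXu]
          exact Set.eq_univ_of_univ_subset (bstep_subset A _)
        · have hnst : ¬ Stalled A X := by
            intro hst
            have := hmax X hst hXu
            omega
          unfold Stalled at hnst
          push_neg at hnst
          obtain ⟨v, hv, w, hvw⟩ := hnst
          have hwX : w ∉ X := by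
            have : w ∈ Nout A v \ X := hvw ▸ rfl
            exact this.2
          have hins : insert w X ⊆ (Bstep A)^[t+1] S := by
            rw [Function.iterate_succ_apply']
            intro x hx
            rcases hx with rfl | hx
            · exact Or.inr ⟨v, hv, hvw⟩
            · exact bstep_subset A X hx
          right
          have h1 : (insert w X).ncard = X.ncard + 1 :=
            Set.ncard_insert_of_notMem hwX (Set.toFinite X)
          have h2 : (insert w X).ncard ≤ ((Bstep A)^[t+1] S).ncard :=
            Set.ncard_le_ncard hins (Set.toFinite _)
          omega
  rcases grow (Fintype.card V + 1) with h | h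
  · exact ⟨_, h⟩
  · exfalso
    have : ((Bstep A)^[Fintype.card V + 1] S).ncard ≤ Fintype.card V := by
      have := Set.ncard_le_ncard (Set.subset_univ ((Bstep A)^[Fintype.card V + 1] S))
        (Set.toFinite _)
      rwa [Set.ncard_univ, Nat.card_eq_fintype_card] at this
    omega

lemma fnum_eq [Fintype V] {k : ℕ} (T₀ : Set V) (h₀ : Stalled A T₀) (hne : T₀ ≠ Set.univ)
    (hcard : T₀.ncard = k)
    (hmax : ∀ T : Set V, Stalled A T → T ≠ Set.univ → T.ncard ≤ k) :
    Fnum A = k := by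
  have hset : {j | ∃ S : Set V, ¬ IsZFS A S ∧ S.ncard = j} = Set.Iic k := by
    ext j
    constructor
    · rintro ⟨S, hF, rfl⟩
      simp only [Set.mem_Iic]
      by_contra h
      push_neg at h
      exact hF (isZFS_of_big A hmax h)
    · intro hj
      obtain ⟨S, hST, hScard⟩ := Set.exists_subset_card_eq (s := T₀) (hcard ▸ hj)
      exact ⟨S, not_isZFS_of_stalled A h₀ hne hST, hScard⟩
  unfold Fnum
  rw [hset]
  exact csSup_Iic

end machinery

section fins
variable {n : ℕ} [NeZero n]

lemma val_cast_of_lt {i : ℕ} (h : i < n) : ((i : ℕ) : Fin n).val = i := by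
  rw [Fin.val_natCast]; exact Nat.mod_eq_of_lt h

lemma cast_succ (i : ℕ) : ((i + 1 : ℕ) : Fin n) = (i : ℕ) + 1 := by push_cast; ring

lemma cast_pred {i : ℕ} (h : 1 ≤ i) : ((i - 1 : ℕ) : Fin n) = ((i : ℕ) : Fin n) - 1 := by
  have h3 : i - 1 + 1 = i := by omega
  have h2 : ((i - 1 : ℕ) : Fin n) + 1 = ((i : ℕ) : Fin n) := by
    rw [← h3]; push_cast; ring
  exact eq_sub_of_add_eq h2

lemma succ_self_eq (v : Fin n) : v + 1 = ((v.val + 1 : ℕ) : Fin n) := by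
  rw [cast_succ, Fin.cast_val_eq_self]

lemma pred_self_eq (v : Fin n) (h : 1 ≤ v.val) : v - 1 = ((v.val - 1 : ℕ) : Fin n) := by
  rw [cast_pred h, Fin.cast_val_eq_self]

lemma succ_val_lt {v : Fin n} (h : v.val + 1 < n) : (v + 1).val = v.val + 1 := by
  rw [succ_self_eq, val_cast_of_lt h]

lemma succ_val_last {v : Fin n} (h : v.val + 1 = n) : (v + 1).val = 0 := by
  rw [succ_self_eq, h]
  simp

lemma pred_val {v : Fin n} (h : 1 ≤ v.val) : (v - 1).val = v.val - 1 := by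
  rw [pred_self_eq v h, val_cast_of_lt (by omega)]

lemma fin_succ_mk {i : ℕ} (hi : i < n) (h : i + 1 < n) :
    (⟨i, hi⟩ : Fin n) + 1 = ⟨i + 1, h⟩ := by
  apply Fin.ext
  rw [Fin.add_def, Fin.val_one']
  show (i + 1 % n) % n = i + 1
  rw [Nat.mod_eq_of_lt (show (1:ℕ) < n by omega), Nat.mod_eq_of_lt h]

lemma fin_last_succ (hn : 1 < n) (h1 : n - 1 < n) (h0 : 0 < n) :
    (⟨n - 1, h1⟩ : Fin n) + 1 = ⟨0, h0⟩ := by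
  apply Fin.ext
  rw [Fin.add_def, Fin.val_one']
  show (n - 1 + 1 % n) % n = 0
  rw [Nat.mod_eq_of_lt hn]
  have : n - 1 + 1 = n := by omega
  rw [this, Nat.mod_self]

/-- successor of arbitrary fin in mk form -/
lemma fin_succ_cases (hn : 1 < n) (v : Fin n) :
    (v + 1).val = v.val + 1 ∨ (v.val = n - 1 ∧ (v + 1).val = 0) := by
  rcases Nat.lt_or_ge (v.val + 1) n with h | h
  · left
    have := fin_succ_mk (i := v.val) v.isLt h
    simp only [Fin.eta] at this
    rw [this]
  · right
    have hv : v.val = n - 1 := by have := v.isLt; omega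
    refine ⟨hv, ?_⟩
    have h1 : n - 1 < n := by omega
    have h0 : 0 < n := by omega
    have : v = ⟨n-1, h1⟩ := Fin.ext hv
    rw [this, fin_last_succ hn h1 h0]

end fins

section famA
variable (n k : ℕ) [NeZero n]

def arcA (v w : Fin n) : Prop :=
  w = v + 1 ∨ (v = w + 1 ∧ Odd v.val ∧ v.val < 2*k)

def OddSet : Set (Fin n) := {v | Odd v.val ∧ v.val < 2*k}

variable {n k}

lemma noutA_nonblk {v : Fin n} (hv : ¬(Odd v.val ∧ v.val < 2*k)) :
    Nout (arcA n k) v = {v + 1} := by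
  ext w
  simp only [Nout, arcA, Set.mem_setOf_eq, Set.mem_singleton_iff]
  constructor
  · rintro (h | ⟨_, h2⟩)
    · exact h
    · exact absurd h2 hv
  · intro h; exact Or.inl h

lemma noutA_blk {v : Fin n} (hv : Odd v.val ∧ v.val < 2*k) :
    Nout (arcA n k) v = {v + 1, v - 1} := by
  ext w
  simp only [Nout, arcA, Set.mem_setOf_eq, Set.mem_insert_iff, Set.mem_singleton_iff]
  constructor
  · rintro (h | ⟨h, _⟩)
    · exact Or.inl h
    · right; rw [h]; ring
  · rintro (h | h)
    · exact Or.inl h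
    · exact Or.inr ⟨by rw [h]; ring, hv⟩

lemma stalledA_force1 {T : Set (Fin n)} (hT : Stalled (arcA n k) T) {v : Fin n}
    (hv : v ∈ T) (hnb : ¬(Odd v.val ∧ v.val < 2*k)) : v + 1 ∈ T := by
  by_contra hw
  refine hT v hv (v + 1) ?_
  rw [noutA_nonblk hnb]
  ext x
  simp only [Set.mem_diff, Set.mem_singleton_iff]
  constructor
  · exact fun h => h.1
  · rintro rfl; exact ⟨rfl, hw⟩

lemma stalledA_force2 {T : Set (Fin n)} (hT : Stalled (arcA n k) T) {v : Fin n}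
    (hv : v ∈ T) (hb : Odd v.val ∧ v.val < 2*k) (hp : v - 1 ∈ T) : v + 1 ∈ T := by
  by_contra hw
  refine hT v hv (v + 1) ?_
  rw [noutA_blk hb]
  ext x
  simp only [Set.mem_diff, Set.mem_insert_iff, Set.mem_singleton_iff]
  constructor
  · rintro ⟨h1 | h1, h2⟩
    · exact h1
    · exact absurd (h1 ▸ hp) h2
  · rintro rfl; exact ⟨Or.inl rfl, hw⟩

lemma stalledA_subset {T : Set (Fin n)} (hT : Stalled (arcA n k) T) (hTu : T ≠ Set.univ) :
    T ⊆ OddSet n k := by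
  intro v₀ hv₀
  by_contra hnb
  apply hTu
  have key : ∀ j : ℕ, (v₀ + (j : Fin n) ∈ T) ∧ (v₀ + ((j+1 : ℕ) : Fin n) ∈ T) := by
    intro j
    induction j with
    | zero =>
      constructor
      · simpa using hv₀
      · have h1 : v₀ + ((1:ℕ) : Fin n) = v₀ + 1 := by push_cast; ring
        rw [h1]
        exact stalledA_force1 hT hv₀ hnb
    | succ j ih =>
      refine ⟨ih.2, ?_⟩
      set u := v₀ + ((j+1 : ℕ) : Fin n) with hu
      have hu1 : v₀ + ((j+2 : ℕ) : Fin n) = u + 1 := by rw [hu]; push_cast; ring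
      have hum1 : u - 1 = v₀ + ((j : ℕ) : Fin n) := by rw [hu]; push_cast; ring
      rw [hu1]
      by_cases hb : Odd u.val ∧ u.val < 2*k
      · exact stalledA_force2 hT ih.2 hb (hum1 ▸ ih.1)
      · exact stalledA_force1 hT ih.2 hb
  apply Set.eq_univ_of_forall
  intro w
  have : v₀ + (((w - v₀).val : ℕ) : Fin n) = w := by
    rw [Fin.cast_val_eq_self]
    ring
  rw [← this]
  exact (key (w - v₀).val).1

lemma oddSet_ncard (hkn : 2*k ≤ n) : (OddSet n k).ncard = k := by
  have himg : OddSet n k = (fun t : ℕ => ((2*t+1 : ℕ) : Fin n)) '' ↑(Finset.range k) := by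
    ext v
    simp only [OddSet, Set.mem_setOf_eq, Set.mem_image, Finset.coe_range, Set.mem_Iio]
    constructor
    · rintro ⟨⟨t, ht⟩, hlt⟩
      refine ⟨t, by omega, ?_⟩
      apply Fin.ext
      rw [Fin.val_natCast, Nat.mod_eq_of_lt (by omega)]
      omega
    · rintro ⟨t, ht, rfl⟩
      rw [Fin.val_natCast, Nat.mod_eq_of_lt (by omega)]
      exact ⟨⟨t, by omega⟩, by omega⟩
  rw [himg, Set.ncard_image_of_injOn, Set.ncard_coe_finset, Finset.card_range]
  intro a ha b hb hab
  simp only [Finset.coe_range, Set.mem_Iio] at ha hb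
  have := congrArg Fin.val hab
  rw [Fin.val_natCast, Fin.val_natCast, Nat.mod_eq_of_lt (by omega),
    Nat.mod_eq_of_lt (by omega)] at this
  omega

lemma stalledA_of_subset (hn : 3 ≤ n) (hkn : 2*k ≤ n) {T : Set (Fin n)}
    (hsub : T ⊆ OddSet n k) : Stalled (arcA n k) T := by
  intro v hv w hw
  have hb : Odd v.val ∧ v.val < 2*k := hsub hv
  obtain ⟨⟨t, ht⟩, hlt⟩ := hb
  have h2t1 : 2*t + 1 < n := by omega
  have h2t : 2*t < n := by omega
  have hveq : v = ⟨2*t+1, h2t1⟩ := Fin.ext (by show v.val = 2*t+1; omega)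
  -- v - 1 = ⟨2*t⟩
  have hpred : v - 1 = ⟨2*t, h2t⟩ := by
    rw [hveq]
    have : (⟨2*t, h2t⟩ : Fin n) + 1 = ⟨2*t+1, h2t1⟩ := fin_succ_mk h2t h2t1
    rw [← this]; ring
  -- values of v+1 and v-1
  have hpredval : (v - 1).val = 2*t := by rw [hpred]
  have hsuccval : (v + 1).val = 2*t + 2 ∨ (v + 1).val = 0 := by
    rcases fin_succ_cases (by omega) v with h | h
    · left; rw [h, hveq]
    · right; exact h.2
  have hsuccT : v + 1 ∉ T := by
    intro hmem
    have := hsub hmem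
    obtain ⟨hodd, _⟩ := this
    rcases hsuccval with h | h <;> rw [h] at hodd
    · rw [Nat.odd_iff] at hodd; omega
    · rw [Nat.odd_iff] at hodd; omega
  have hpredT : v - 1 ∉ T := by
    intro hmem
    obtain ⟨hodd, _⟩ := hsub hmem
    rw [hpredval, Nat.odd_iff] at hodd
    omega
  have hne : v + 1 ≠ v - 1 := by
    intro heq
    have := congrArg Fin.val heq
    rw [hpredval] at this
    rcases hsuccval with h | h <;> rw [h] at this
    · omega
    · -- 0 = 2*t, so t = 0, v.val = 1; v+1 val 0 means v.val = n-1, so n = 2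
      have ht0 : t = 0 := by omega
      rcases fin_succ_cases (show 1 < n by omega) v with h' | h'
      · rw [h'] at h; omega
      · have hv2 := h'.1
        rw [hveq] at hv2
        have : (⟨2*t+1, h2t1⟩ : Fin n).val = 2*t+1 := rfl
        rw [this] at hv2
        omega
  have hdiff : Nout (arcA n k) v \ T = {v + 1, v - 1} := by
    rw [noutA_blk ⟨⟨t, by omega⟩, hlt⟩]
    ext x
    simp only [Set.mem_diff, Set.mem_insert_iff, Set.mem_singleton_iff]
    constructor
    · exact fun h => h.1
    · rintro (rfl | rfl)
      · exact ⟨Or.inl rfl, hsuccT⟩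
      · exact ⟨Or.inr rfl, hpredT⟩
  rw [hdiff] at hw
  have h1 : v + 1 ∈ ({w} : Set (Fin n)) := by rw [← hw]; exact Or.inl rfl
  have h2 : v - 1 ∈ ({w} : Set (Fin n)) := by rw [← hw]; exact Or.inr rfl
  simp only [Set.mem_singleton_iff] at h1 h2
  exact hne (h1.trans h2.symm)

lemma oddSet_ne_univ (hn : 3 ≤ n) : OddSet n k ≠ Set.univ := by
  intro h
  have h0 : (0 : Fin n) ∈ OddSet n k := h ▸ Set.mem_univ _
  obtain ⟨hodd, _⟩ := h0
  have hz : ((0 : Fin n)).val = 0 := rfl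
  rw [hz, Nat.odd_iff] at hodd
  omega

end famA

section famB
variable (n m : ℕ) [NeZero n]

/-- blockers 1..2m (arcs both ways), chain v > 2m (arc to v+1), sink 0 -/
def arcB (v w : Fin n) : Prop :=
  (1 ≤ v.val ∧ v.val ≤ 2*m ∧ (w = v + 1 ∨ v = w + 1)) ∨ (2*m < v.val ∧ w = v + 1)

variable {n m}

lemma noutB_sink {v : Fin n} (h : v.val = 0) : Nout (arcB n m) v = ∅ := by
  ext w
  simp only [Nout, arcB, Set.mem_setOf_eq, Set.mem_empty_iff_false, iff_false]
  rintro (⟨h1, _⟩ | ⟨h1, _⟩) <;> omega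

lemma noutB_blk {v : Fin n} (h1 : 1 ≤ v.val) (h2 : v.val ≤ 2*m) :
    Nout (arcB n m) v = {v + 1, v - 1} := by
  ext w
  simp only [Nout, arcB, Set.mem_setOf_eq, Set.mem_insert_iff, Set.mem_singleton_iff]
  constructor
  · rintro (⟨_, _, (h | h)⟩ | ⟨h, _⟩)
    · exact Or.inl h
    · right; rw [h]; ring
    · omega
  · rintro (h | h)
    · exact Or.inl ⟨h1, h2, Or.inl h⟩
    · exact Or.inl ⟨h1, h2, Or.inr (by rw [h]; ring)⟩

lemma noutB_chain {v : Fin n} (h : 2*m < v.val) : Nout (arcB n m) v = {v + 1} := by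
  ext w
  simp only [Nout, arcB, Set.mem_setOf_eq, Set.mem_singleton_iff]
  constructor
  · rintro (⟨_, h2, _⟩ | ⟨_, h2⟩)
    · omega
    · exact h2
  · intro h2; exact Or.inr ⟨h, h2⟩

variable {T : Set (Fin n)} (hT : Stalled (arcB n m) T)
include hT

lemma forceB_chain {v : Fin n} (hv : v ∈ T) (h : 2*m < v.val) : v + 1 ∈ T := by
  by_contra hw
  refine hT v hv (v + 1) ?_
  rw [noutB_chain h]
  ext x
  simp only [Set.mem_diff, Set.mem_singleton_iff]
  exact ⟨fun h => h.1, by rintro rfl; exact ⟨rfl, hw⟩⟩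

lemma forceB_up {v : Fin n} (hv : v ∈ T) (h1 : 1 ≤ v.val) (h2 : v.val ≤ 2*m)
    (hp : v - 1 ∈ T) : v + 1 ∈ T := by
  by_contra hw
  refine hT v hv (v + 1) ?_
  rw [noutB_blk h1 h2]
  ext x
  simp only [Set.mem_diff, Set.mem_insert_iff, Set.mem_singleton_iff]
  constructor
  · rintro ⟨h3 | h3, h4⟩
    · exact h3
    · exact absurd (h3 ▸ hp) h4
  · rintro rfl; exact ⟨Or.inl rfl, hw⟩

lemma forceB_down {v : Fin n} (hv : v ∈ T) (h1 : 1 ≤ v.val) (h2 : v.val ≤ 2*m)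
    (hp : v + 1 ∈ T) : v - 1 ∈ T := by
  by_contra hw
  refine hT v hv (v - 1) ?_
  rw [noutB_blk h1 h2]
  ext x
  simp only [Set.mem_diff, Set.mem_insert_iff, Set.mem_singleton_iff]
  constructor
  · rintro ⟨h3 | h3, h4⟩
    · exact absurd (h3 ▸ hp) h4
    · exact h3
  · rintro rfl; exact ⟨Or.inr rfl, hw⟩

variable (hn : 3 ≤ n) (hm : 1 ≤ m) (hmn : 2*m + 3 ≤ n)
include hn hm hmn

-- natural-number versions
lemma natB_chain {i : ℕ} (h : 2*m < i) (hin : i < n) (hv : ((i : ℕ) : Fin n) ∈ T) :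
    ((i + 1 : ℕ) : Fin n) ∈ T := by
  rw [cast_succ]
  exact forceB_chain hT hv (by rw [val_cast_of_lt hin]; exact h)

lemma natB_up {i : ℕ} (h1 : 1 ≤ i) (h2 : i ≤ 2*m) (hp : ((i - 1 : ℕ) : Fin n) ∈ T)
    (hv : ((i : ℕ) : Fin n) ∈ T) : ((i + 1 : ℕ) : Fin n) ∈ T := by
  have hin : i < n := by omega
  rw [cast_succ]
  refine forceB_up hT hv (by rw [val_cast_of_lt hin]; omega)
    (by rw [val_cast_of_lt hin]; omega) ?_
  rw [← cast_pred h1]; exact hp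

lemma natB_down {i : ℕ} (h1 : 1 ≤ i) (h2 : i ≤ 2*m) (hp : ((i + 1 : ℕ) : Fin n) ∈ T)
    (hv : ((i : ℕ) : Fin n) ∈ T) : ((i - 1 : ℕ) : Fin n) ∈ T := by
  have hin : i < n := by omega
  rw [cast_pred h1]
  refine forceB_down hT hv (by rw [val_cast_of_lt hin]; omega)
    (by rw [val_cast_of_lt hin]; omega) ?_
  rw [← cast_succ]; exact hp

lemma pairup {j : ℕ} (hj : 1 ≤ j) (ha : ((j - 1 : ℕ) : Fin n) ∈ T)
    (hb : ((j : ℕ) : Fin n) ∈ T) :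
    ∀ d, j + d ≤ 2*m + 1 → ((j + d - 1 : ℕ) : Fin n) ∈ T ∧ ((j + d : ℕ) : Fin n) ∈ T := by
  intro d
  induction d with
  | zero => intro _; rw [Nat.add_zero]; exact ⟨ha, hb⟩
  | succ d ih =>
    intro hle
    obtain ⟨p, q⟩ := ih (by omega)
    have hnext : ((j + d + 1 : ℕ) : Fin n) ∈ T :=
      natB_up hT hn hm hmn (by omega) (by omega) p q
    constructor
    · have : j + (d + 1) - 1 = j + d := by omega
      rw [this]; exact q
    · have : j + (d + 1) = j + d + 1 := by omega
      rw [this]; exact hnext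

lemma pairdown {j : ℕ} (hj : j ≤ 2*m) (ha : ((j : ℕ) : Fin n) ∈ T)
    (hb : ((j + 1 : ℕ) : Fin n) ∈ T) :
    ∀ d, d ≤ j → ((j - d : ℕ) : Fin n) ∈ T ∧ ((j - d + 1 : ℕ) : Fin n) ∈ T := by
  intro d
  induction d with
  | zero => intro _; rw [Nat.sub_zero]; exact ⟨ha, hb⟩
  | succ d ih =>
    intro hle
    obtain ⟨p, q⟩ := ih (by omega)
    have h1 : 1 ≤ j - d := by omega
    have hprev : ((j - d - 1 : ℕ) : Fin n) ∈ T := by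
      refine natB_down hT hn hm hmn h1 (by omega) ?_ p
      have : j - d + 1 = (j - d) + 1 := rfl
      rw [← this]; exact q
    constructor
    · have : j - (d + 1) = j - d - 1 := by omega
      rw [this]; exact hprev
    · have : j - (d + 1) + 1 = j - d := by omega
      rw [this]; exact p

lemma chainup (hc : ((2*m + 1 : ℕ) : Fin n) ∈ T) :
    ∀ i, 2*m + 1 ≤ i → i < n → ((i : ℕ) : Fin n) ∈ T := by
  have key : ∀ d, 2*m + 1 + d < n → ((2*m + 1 + d : ℕ) : Fin n) ∈ T := by
    intro d
    induction d with
    | zero => intro _; rw [Nat.add_zero]; exact hc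
    | succ d ih =>
      intro hlt
      have := natB_chain hT hn hm hmn (i := 2*m+1+d) (by omega) (by omega) (ih (by omega))
      have heq : 2*m + 1 + (d + 1) = 2*m + 1 + d + 1 := by omega
      rw [heq]; exact this
  intro i h1 h2
  have : i = 2*m + 1 + (i - (2*m+1)) := by omega
  rw [this]
  exact key _ (by omega)

variable (hTu : T ≠ Set.univ)
include hTu

lemma caseI : ¬(((2*m : ℕ) : Fin n) ∈ T ∧ ((2*m + 1 : ℕ) : Fin n) ∈ T) := by
  rintro ⟨hA, hB⟩
  apply hTu
  have low : ∀ i, i ≤ 2*m → ((i : ℕ) : Fin n) ∈ T := by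
    intro i hi
    have := (pairdown hT hn hm hmn (le_refl (2*m)) hA hB (2*m - i) (by omega)).1
    have heq : 2*m - (2*m - i) = i := by omega
    rwa [heq] at this
  have high : ∀ i, 2*m + 1 ≤ i → i < n → ((i : ℕ) : Fin n) ∈ T :=
    chainup hT hn hm hmn hB
  apply Set.eq_univ_of_forall
  intro v
  have hv : ((v.val : ℕ) : Fin n) = v := Fin.cast_val_eq_self v
  rcases le_or_gt v.val (2*m) with h | h
  · rw [← hv]; exact low _ h
  · rw [← hv]; exact high _ (by omega) v.isLt

lemma complB_big : m + 1 ≤ Tᶜ.ncard := by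
  classical
  have finish : ∀ (f : ℕ → Fin n) (lo hi : ℕ → ℕ),
      (∀ a b, a ≤ m → b ≤ m → a < b → hi a < lo b) →
      (∀ j, j ≤ m → f j ∉ T) →
      (∀ j, j ≤ m → lo j ≤ (f j).val ∧ (f j).val ≤ hi j) →
      m + 1 ≤ Tᶜ.ncard := by
    intro f lo hi hlo hmem hval
    have hsub : f '' ↑(Finset.range (m+1)) ⊆ Tᶜ := by
      rintro x ⟨j, hj, rfl⟩
      simp only [Finset.coe_range, Set.mem_Iio] at hj
      exact hmem j (by omega)
    have hinj : Set.InjOn f ↑(Finset.range (m+1)) := by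
      intro a ha b hb hab
      simp only [Finset.coe_range, Set.mem_Iio] at ha hb
      by_contra hne
      rcases Nat.lt_or_ge a b with h | h
      · have h1 := hval a (by omega)
        have h2 := hval b (by omega)
        have := hlo a b (by omega) (by omega) h
        rw [hab] at h1
        omega
      · have hba : b < a := by omega
        have h1 := hval a (by omega)
        have h2 := hval b (by omega)
        have := hlo b a (by omega) (by omega) hba
        rw [hab] at h1
        omega
    calc m + 1 = (f '' ↑(Finset.range (m+1))).ncard := by
          rw [Set.ncard_image_of_injOn hinj, Set.ncard_coe_finset, Finset.card_range]
      _ ≤ Tᶜ.ncard := Set.ncard_le_ncard hsub (Set.toFinite _)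
  by_cases hC : ((2*m + 1 : ℕ) : Fin n) ∈ T
  · -- Case II
    have hCm : ((2*m : ℕ) : Fin n) ∉ T := by
      intro h
      exact caseI hT hn hm hmn hTu ⟨h, hC⟩
    have h0 : ((0 : ℕ) : Fin n) ∈ T := by
      have hn1 := chainup hT hn hm hmn hC (n-1) (by omega) (by omega)
      have := natB_chain hT hn hm hmn (i := n-1) (by omega) (by omega) hn1
      have heq : n - 1 + 1 = n := by omega
      rw [heq] at this
      simpa using this
    have h1 : ((1 : ℕ) : Fin n) ∉ T := by
      intro h
      have := (pairup hT hn hm hmn (le_refl 1) (by simpa using h0) h (2*m - 1)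
        (by omega)).2
      have heq : 1 + (2*m - 1) = 2*m := by omega
      rw [heq] at this
      exact hCm this
    have hpair : ∀ j, 1 ≤ j → j ≤ m - 1 →
        ¬(((2*j : ℕ) : Fin n) ∈ T ∧ ((2*j + 1 : ℕ) : Fin n) ∈ T) := by
      rintro j hj1 hj2 ⟨p, q⟩
      have := (pairup hT hn hm hmn (j := 2*j+1) (by omega)
        (by have heq2 : 2*j + 1 - 1 = 2*j := by omega
            rw [heq2]; exact p) q (2*m - (2*j+1)) (by omega)).2
      have heq : 2*j + 1 + (2*m - (2*j+1)) = 2*m := by omega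
      rw [heq] at this
      exact hCm this
    refine finish
      (fun j => if j = m then ((2*m : ℕ) : Fin n) else if j = 0 then ((1 : ℕ) : Fin n)
        else if ((2*j : ℕ) : Fin n) ∈ T then ((2*j + 1 : ℕ) : Fin n) else ((2*j : ℕ) : Fin n))
      (fun j => max (2*j) 1)
      (fun j => min (2*j + 1) (2*m)) ?_ ?_ ?_
    · intro a b ha hb hab
      omega
    · intro j hj
      by_cases hjm : j = m
      · rw [if_pos hjm]; exact hCm
      · rw [if_neg hjm]
        by_cases hj0 : j = 0
        · rw [if_pos hj0]; exact h1
        · rw [if_neg hj0]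
          by_cases ht : ((2*j : ℕ) : Fin n) ∈ T
          · rw [if_pos ht]
            intro h
            exact hpair j (by omega) (by omega) ⟨ht, h⟩
          · rw [if_neg ht]
            exact ht
    · intro j hj
      by_cases hjm : j = m
      · rw [if_pos hjm, hjm, val_cast_of_lt (by omega)]
        omega
      · rw [if_neg hjm]
        by_cases hj0 : j = 0
        · rw [if_pos hj0, hj0, val_cast_of_lt (by omega)]
          omega
        · rw [if_neg hj0]
          by_cases ht : ((2*j : ℕ) : Fin n) ∈ T
          · rw [if_pos ht, val_cast_of_lt (by omega)]
            omega
          · rw [if_neg ht, val_cast_of_lt (by omega)]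
            omega
  · -- Case III
    have hpair : ∀ j, 1 ≤ j → j ≤ m →
        ¬(((2*j - 1 : ℕ) : Fin n) ∈ T ∧ ((2*j : ℕ) : Fin n) ∈ T) := by
      rintro j hj1 hj2 ⟨p, q⟩
      have := (pairup hT hn hm hmn (j := 2*j) (by omega) p q (2*m + 1 - 2*j) (by omega)).2
      have heq : 2*j + (2*m + 1 - 2*j) = 2*m + 1 := by omega
      rw [heq] at this
      exact hC this
    refine finish
      (fun j => if j = m then ((2*m + 1 : ℕ) : Fin n)
        else if ((2*j + 1 : ℕ) : Fin n) ∈ T then ((2*j + 2 : ℕ) : Fin n)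
        else ((2*j + 1 : ℕ) : Fin n))
      (fun j => 2*j + 1)
      (fun j => min (2*j + 2) (2*m + 1)) ?_ ?_ ?_
    · intro a b ha hb hab
      omega
    · intro j hj
      by_cases hjm : j = m
      · rw [if_pos hjm]; exact hC
      · rw [if_neg hjm]
        by_cases ht : ((2*j + 1 : ℕ) : Fin n) ∈ T
        · rw [if_pos ht]
          intro h
          refine hpair (j+1) (by omega) (by omega) ⟨?_, ?_⟩
          · have heq : 2*(j+1) - 1 = 2*j + 1 := by omega
            rw [heq]; exact ht
          · have heq : 2*(j+1) = 2*j + 2 := by omega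
            rw [heq]; exact h
        · rw [if_neg ht]
          exact ht
    · intro j hj
      by_cases hjm : j = m
      · rw [if_pos hjm, hjm, val_cast_of_lt (by omega)]
        omega
      · rw [if_neg hjm]
        by_cases ht : ((2*j + 1 : ℕ) : Fin n) ∈ T
        · rw [if_pos ht, val_cast_of_lt (by omega)]
          omega
        · rw [if_neg ht, val_cast_of_lt (by omega)]
          omega

lemma famB_bound : T.ncard ≤ n - 1 - m := by
  have h1 := complB_big hT hn hm hmn hTu
  have h2 : T.ncard + Tᶜ.ncard = n := by
    rw [Set.ncard_add_ncard_compl, Nat.card_eq_fintype_card, Fintype.card_fin]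
  omega

end famB

section famB2
variable {n m : ℕ} [NeZero n]

lemma noutB_sink' {v : Fin n} (h : v.val = 0) : Nout (arcB n m) v = ∅ := by
  ext w
  simp only [Nout, arcB, Set.mem_setOf_eq, Set.mem_empty_iff_false, iff_false]
  rintro (⟨h1, _⟩ | ⟨h1, _⟩) <;> omega

lemma noutB_blk' {v : Fin n} (h1 : 1 ≤ v.val) (h2 : v.val ≤ 2*m) :
    Nout (arcB n m) v = {v + 1, v - 1} := by
  ext w
  simp only [Nout, arcB, Set.mem_setOf_eq, Set.mem_insert_iff, Set.mem_singleton_iff]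
  constructor
  · rintro (⟨_, _, (h | h)⟩ | ⟨h, _⟩)
    · exact Or.inl h
    · right; rw [h]; ring
    · omega
  · rintro (h | h)
    · exact Or.inl ⟨h1, h2, Or.inl h⟩
    · exact Or.inl ⟨h1, h2, Or.inr (by rw [h]; ring)⟩

lemma noutB_chain' {v : Fin n} (h : 2*m < v.val) : Nout (arcB n m) v = {v + 1} := by
  ext w
  simp only [Nout, arcB, Set.mem_setOf_eq, Set.mem_singleton_iff]
  constructor
  · rintro (⟨_, h2, _⟩ | ⟨_, h2⟩)
    · omega
    · exact h2
  · intro h2; exact Or.inr ⟨h, h2⟩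

variable (hn : 3 ≤ n) (hm : 1 ≤ m) (hmn : 2*m + 3 ≤ n)

def TB (n m : ℕ) : Set (Fin n) := {v | ¬(Odd v.val ∧ v.val ≤ 2*m + 1)}

include hn hm hmn in
lemma TB_stalled : Stalled (arcB n m) (TB n m) := by
  intro v hv w hw
  simp only [TB, Set.mem_setOf_eq, not_and, Nat.not_le] at hv
  rcases Nat.eq_zero_or_pos v.val with h0 | h0
  · rw [noutB_sink' h0, Set.empty_diff] at hw
    exact (Set.singleton_ne_empty w).symm hw
  · rcases le_or_gt v.val (2*m) with hble | hbgt
    · -- blocker, v.val even (else contradiction with hv)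
      have heven : ¬ Odd v.val := fun ho => by have := hv ho; omega
      rw [Nat.not_odd_iff_even, Nat.even_iff] at heven
      have hsv : (v + 1).val = v.val + 1 := succ_val_lt (by omega)
      have hpv : (v - 1).val = v.val - 1 := pred_val h0
      have hsT : v + 1 ∉ TB n m := by
        simp only [TB, Set.mem_setOf_eq, not_not]
        rw [hsv]
        constructor
        · rw [Nat.odd_iff]; omega
        · omega
      have hpT : v - 1 ∉ TB n m := by
        simp only [TB, Set.mem_setOf_eq, not_not]
        rw [hpv]
        constructor
        · rw [Nat.odd_iff]; omega
        · omega
      rw [noutB_blk' h0 hble] at hw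
      have hdiff : ({v + 1, v - 1} : Set (Fin n)) \ TB n m = {v + 1, v - 1} := by
        ext x
        simp only [Set.mem_diff, Set.mem_insert_iff, Set.mem_singleton_iff]
        constructor
        · exact fun h => h.1
        · rintro (rfl | rfl)
          · exact ⟨Or.inl rfl, hsT⟩
          · exact ⟨Or.inr rfl, hpT⟩
      rw [hdiff] at hw
      have e1 : v + 1 ∈ ({w} : Set (Fin n)) := by rw [← hw]; exact Or.inl rfl
      have e2 : v - 1 ∈ ({w} : Set (Fin n)) := by rw [← hw]; exact Or.inr rfl
      simp only [Set.mem_singleton_iff] at e1 e2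
      have := congrArg Fin.val (e1.trans e2.symm)
      rw [hsv, hpv] at this
      omega
    · -- chain; note v.val ≠ 2m+1 impossible since then Odd contradiction... 
      have hgt : 2*m + 1 < v.val ∨ v.val = 2*m + 1 := by omega
      have hgt2 : 2*m + 1 < v.val := by
        rcases hgt with h | h
        · exact h
        · exfalso
          have := hv (by rw [Nat.odd_iff]; omega)
          omega
      have hsT : v + 1 ∈ TB n m := by
        simp only [TB, Set.mem_setOf_eq, not_and, Nat.not_le]
        rcases Nat.lt_or_ge (v.val + 1) n with h | h
        · rw [succ_val_lt h]; intro _; omega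
        · have hlast : v.val + 1 = n := by have := v.isLt; omega
          rw [succ_val_last hlast]
          intro hodd
          rw [Nat.odd_iff] at hodd
          omega
      rw [noutB_chain' hbgt] at hw
      have : ({v + 1} : Set (Fin n)) \ TB n m = ∅ := by
        ext x
        simp only [Set.mem_diff, Set.mem_singleton_iff, Set.mem_empty_iff_false, iff_false,
          not_and]
        rintro rfl
        intro h; exact h hsT
      rw [this] at hw
      exact (Set.singleton_ne_empty w).symm hw

include hn hm hmn in
lemma TB_ncard : (TB n m).ncard = n - 1 - m := by
  have hU : ({v : Fin n | Odd v.val ∧ v.val ≤ 2*m + 1}).ncard = m + 1 := by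
    have himg : {v : Fin n | Odd v.val ∧ v.val ≤ 2*m + 1}
        = (fun t : ℕ => ((2*t+1 : ℕ) : Fin n)) '' ↑(Finset.range (m+1)) := by
      ext v
      simp only [Set.mem_setOf_eq, Set.mem_image, Finset.coe_range, Set.mem_Iio]
      constructor
      · rintro ⟨⟨t, ht⟩, hle⟩
        refine ⟨t, by omega, ?_⟩
        apply Fin.ext
        rw [val_cast_of_lt (by omega)]
        omega
      · rintro ⟨t, ht, rfl⟩
        rw [val_cast_of_lt (by omega)]
        constructor
        · exact ⟨t, rfl⟩
        · omega
    rw [himg, Set.ncard_image_of_injOn, Set.ncard_coe_finset, Finset.card_range]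
    intro a ha b hb hab
    simp only [Finset.coe_range, Set.mem_Iio] at ha hb
    have := congrArg Fin.val hab
    rw [val_cast_of_lt (by omega), val_cast_of_lt (by omega)] at this
    omega
  have hcompl : TB n m = {v : Fin n | Odd v.val ∧ v.val ≤ 2*m + 1}ᶜ := rfl
  have hsum := Set.ncard_add_ncard_compl {v : Fin n | Odd v.val ∧ v.val ≤ 2*m + 1}
  rw [Nat.card_eq_fintype_card, Fintype.card_fin, hU] at hsum
  rw [hcompl]
  omega

include hn hm in
lemma TB_ne_univ : TB n m ≠ Set.univ := by
  intro h
  have h1 : ((1 : ℕ) : Fin n) ∈ TB n m := h ▸ Set.mem_univ _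
  simp only [TB, Set.mem_setOf_eq, not_and, Nat.not_le] at h1
  rw [val_cast_of_lt (by omega)] at h1
  have := h1 (by rw [Nat.odd_iff])
  omega

include hn hm hmn in
lemma arcB_weak1 : ∀ i j : Fin n, arcB n m i j → (j = i + 1 ∨ i = j + 1) := by
  rintro i j (⟨_, _, h⟩ | ⟨_, h⟩)
  · exact h
  · exact Or.inl h

include hn hm hmn in
lemma arcB_weak2 : ∀ i : Fin n, arcB n m i (i + 1) ∨ arcB n m (i + 1) i := by
  intro i
  rcases Nat.eq_zero_or_pos i.val with h0 | h0
  · right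
    have hv : (i + 1).val = 1 := by rw [succ_val_lt (by omega), h0]
    exact Or.inl ⟨by omega, by omega, Or.inr rfl⟩
  · rcases le_or_gt i.val (2*m) with h | h
    · exact Or.inl (Or.inl ⟨h0, h, Or.inl rfl⟩)
    · exact Or.inl (Or.inr ⟨h, rfl⟩)

end famB2

/-- family C : k = n-1 -/
def arcC (n : ℕ) [NeZero n] (v w : Fin n) : Prop :=
  (v.val < n - 1 ∧ w = v + 1) ∨ (v.val = 0 ∧ v = w + 1)

def TCset (n : ℕ) [NeZero n] : Set (Fin n) := {v | v ≠ 0}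

section famC
variable {n : ℕ} [NeZero n] (hn : 3 ≤ n)

include hn in
lemma TC_stalled : Stalled (arcC n) (TCset n) := by
  intro v hv w hw
  simp only [TCset, Set.mem_setOf_eq] at hv
  have hv0 : v.val ≠ 0 := fun h => hv (Fin.ext h)
  rcases Nat.lt_or_ge v.val (n - 1) with hlt | hge
  · have hnout : Nout (arcC n) v = {v + 1} := by
      ext x
      simp only [Nout, arcC, Set.mem_setOf_eq, Set.mem_singleton_iff]
      constructor
      · rintro (⟨_, h⟩ | ⟨h, _⟩)
        · exact h
        · exact absurd h hv0
      · intro h; exact Or.inl ⟨hlt, h⟩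
    have hsT : v + 1 ∈ TCset n := by
      simp only [TCset, Set.mem_setOf_eq]
      intro h
      have := congrArg Fin.val h
      rw [succ_val_lt (by omega)] at this
      simp at this
    rw [hnout] at hw
    have : ({v + 1} : Set (Fin n)) \ TCset n = ∅ := by
      ext x
      simp only [Set.mem_diff, Set.mem_singleton_iff, Set.mem_empty_iff_false, iff_false,
        not_and]
      rintro rfl h
      exact h hsT
    rw [this] at hw
    exact (Set.singleton_ne_empty w).symm hw
  · have hnout : Nout (arcC n) v = ∅ := by
      ext x
      simp only [Nout, arcC, Set.mem_setOf_eq, Set.mem_empty_iff_false, iff_false]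
      rintro (⟨h, _⟩ | ⟨h, _⟩) <;> omega
    rw [hnout, Set.empty_diff] at hw
    exact (Set.singleton_ne_empty w).symm hw

include hn in
lemma TC_ncard : (TCset n).ncard = n - 1 := by
  have hcompl : TCset n = ({0} : Set (Fin n))ᶜ := by
    ext v; simp [TCset]
  have hsum := Set.ncard_add_ncard_compl ({0} : Set (Fin n))
  rw [Nat.card_eq_fintype_card, Fintype.card_fin, Set.ncard_singleton] at hsum
  rw [hcompl]
  omega

lemma TC_ne_univ : TCset n ≠ Set.univ := by
  intro h
  have h1 : (0 : Fin n) ∈ TCset n := h ▸ Set.mem_univ _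
  simp [TCset] at h1

include hn in
lemma arcC_weak2 : ∀ i : Fin n, arcC n i (i + 1) ∨ arcC n (i + 1) i := by
  intro i
  rcases Nat.lt_or_ge i.val (n - 1) with h | h
  · exact Or.inl (Or.inl ⟨h, rfl⟩)
  · right
    have hlast : i.val + 1 = n := by have := i.isLt; omega
    exact Or.inr ⟨succ_val_last hlast, rfl⟩

/-- generic : any proper set has ncard ≤ n - 1 -/
lemma ncard_le_of_ne_univ {T : Set (Fin n)} (hTu : T ≠ Set.univ) : T.ncard ≤ n - 1 := by
  obtain ⟨x, hx⟩ := (Set.ne_univ_iff_exists_notMem T).mp hTu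
  have hsub : T ⊆ ({x} : Set (Fin n))ᶜ := by
    intro y hy
    simp only [Set.mem_compl_iff, Set.mem_singleton_iff]
    rintro rfl; exact hx hy
  have := Set.ncard_le_ncard hsub (Set.toFinite _)
  have hsum := Set.ncard_add_ncard_compl ({x} : Set (Fin n))
  rw [Nat.card_eq_fintype_card, Fintype.card_fin, Set.ncard_singleton] at hsum
  omega

end famC

end portopen


theorem stmt_19 (n k : ℕ) (hn : 3 ≤ n) [NeZero n] (hk : k ≤ n - 1) :
    ∃ A : Fin n → Fin n → Prop,
      (∀ i j : Fin n, A i j → (j = i + 1 ∨ i = j + 1)) ∧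
      (∀ i : Fin n, A i (i + 1) ∨ A (i + 1) i) ∧
      Fnum A = k := by
  by_cases hA : 2*k ≤ n
  · refine ⟨arcA n k, ?_, ?_, ?_⟩
    · rintro i j (h | ⟨h, _⟩)
      · exact Or.inl h
      · exact Or.inr h
    · intro i; exact Or.inl (Or.inl rfl)
    · refine fnum_eq _ (OddSet n k) (stalledA_of_subset hn hA (Set.Subset.refl _))
        (oddSet_ne_univ hn) (oddSet_ncard hA) ?_
      intro T hT hTu
      calc T.ncard ≤ (OddSet n k).ncard :=
            Set.ncard_le_ncard (stalledA_subset hT hTu) (Set.toFinite _)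
        _ = k := oddSet_ncard hA
  · push_neg at hA
    by_cases hk1 : k = n - 1
    · subst hk1
      refine ⟨arcC n, ?_, arcC_weak2 hn, ?_⟩
      · rintro i j (⟨_, h⟩ | ⟨_, h⟩)
        · exact Or.inl h
        · exact Or.inr h
      · exact fnum_eq _ (TCset n) (TC_stalled hn) TC_ne_univ (TC_ncard hn)
          (fun T _ hTu => ncard_le_of_ne_univ hTu)
    · have hm : 1 ≤ n - 1 - k := by omega
      have hmn : 2*(n - 1 - k) + 3 ≤ n := by omega
      have hkm : n - 1 - (n - 1 - k) = k := by omega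
      refine ⟨arcB n (n - 1 - k), arcB_weak1 hn hm hmn, arcB_weak2 hn hm hmn, ?_⟩
      have hres : Fnum (arcB n (n - 1 - k)) = n - 1 - (n - 1 - k) :=
        fnum_eq _ (TB n (n - 1 - k)) (TB_stalled hn hm hmn) (TB_ne_univ hn hm)
          (TB_ncard hn hm hmn) (fun T hT hTu => famB_bound hT hn hm hmn hTu)
      rw [hres]
      omega
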